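/- Let M = (m_1, ..., m_n) be a strictly increasing integer sequence and A = (a_1, ..., a_n) an arbitrary integer sequence. Define inv(A) as the number of pairs i < j with a_i ≥ a_j, and cost(A) = Σ_{i=1}^n |a_i - m_i|. Then inv(A) ≤ 2·cost(A). -/

import Mathlib

/-- Combinatorial inversion lemma: if `m` is strictly increasing and `a` is arbitrary,
then the number of weak inversions of `a` is at most twice the ℓ1 distance from `a` to `m`. -/
theorem inv_le_two_cost (n : ℕ) (m a : Fin n → ℤ) (hm : StrictMono m) :
    ((Finset.univ.filter (fun p : Fin n × Fin n => p.1 < p.2 ∧ a p.2 ≤ a p.1)).card : ℤ)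
      ≤ 2 * ∑ i, |a i - m i| := by
  classical
  set T := Finset.univ.filter (fun p : Fin n × Fin n => p.1 < p.2 ∧ a p.2 ≤ a p.1) with hT
  set f : Fin n × Fin n → Fin n :=
    fun p => if m p.2 - a p.2 ≤ a p.1 - m p.1 then p.1 else p.2 with hf
  have hcard : T.card = ∑ k : Fin n, (T.filter (fun p => f p = k)).card :=
    Finset.card_eq_sum_card_fiberwise (fun p _ => Finset.mem_univ _)
  have key : ∀ k : Fin n,
      ((T.filter (fun p => f p = k)).card : ℤ) ≤ 2 * |a k - m k| := by
    intro k
    have hsub : (T.filter (fun p => f p = k)).card ≤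
        (Finset.Ico (m k - 2*(m k - a k)) (m k) ∪
          Finset.Ioc (m k) (m k + 2*(a k - m k))).card := by
      apply Finset.card_le_card_of_injOn (fun p => m (if p.1 = k then p.2 else p.1))
      · intro p hp
        simp only [Finset.mem_coe, Finset.mem_filter, hT, Finset.mem_univ, true_and] at hp
        obtain ⟨⟨hlt, hle⟩, hfk⟩ := hp
        simp only [Finset.mem_coe, Finset.mem_union, Finset.mem_Ico, Finset.mem_Ioc]
        have hmm := hm hlt
        by_cases hc : m p.2 - a p.2 ≤ a p.1 - m p.1
        · have h1 : p.1 = k := by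
            simp only [hf] at hfk; rwa [if_pos hc] at hfk
          right
          subst h1
          rw [if_pos rfl]
          omega
        · have h2 : p.2 = k := by
            simp only [hf] at hfk; rwa [if_neg hc] at hfk
          have hne : p.1 ≠ k := by
            intro h; rw [h, ← h2] at hlt; exact lt_irrefl _ hlt
          left
          subst h2
          rw [if_neg hne]
          omega
      · intro p hp q hq heq
        simp only [Finset.mem_coe, Finset.mem_filter, hT, Finset.mem_univ, true_and] at hp hq
        obtain ⟨⟨hp1, hp2⟩, hpf⟩ := hp
        obtain ⟨⟨hq1, hq2⟩, hqf⟩ := hq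
        have hinj := hm.injective heq
        have haux : ∀ r : Fin n × Fin n, r.1 < r.2 → f r = k → r.1 = k ∨ r.2 = k := by
          intro r _ hrf
          by_cases hc : m r.2 - a r.2 ≤ a r.1 - m r.1
          · left; simp only [hf] at hrf; rwa [if_pos hc] at hrf
          · right; simp only [hf] at hrf; rwa [if_neg hc] at hrf
        have hp' : p.1 = k ∨ (p.1 ≠ k ∧ p.2 = k) := by
          rcases haux p hp1 hpf with h | h
          · left; exact h
          · by_cases h1 : p.1 = k
            · left; exact h1
            · right; exact ⟨h1, h⟩
        have hq' : q.1 = k ∨ (q.1 ≠ k ∧ q.2 = k) := by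
          rcases haux q hq1 hqf with h | h
          · left; exact h
          · by_cases h1 : q.1 = k
            · left; exact h1
            · right; exact ⟨h1, h⟩
        rcases hp' with hp' | ⟨hp'1, hp'2⟩ <;> rcases hq' with hq' | ⟨hq'1, hq'2⟩
        · rw [if_pos hp', if_pos hq'] at hinj
          exact Prod.ext (hp'.trans hq'.symm) hinj
        · rw [if_pos hp', if_neg hq'1] at hinj
          -- p.2 = q.1, but p.2 > p.1 = k and q.1 < q.2 = k : contradiction
          exfalso
          have h1 : k < p.2 := hp' ▸ hp1
          have h2 : q.1 < k := hq'2 ▸ hq1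
          rw [hinj] at h1; exact absurd (h1.trans h2) (lt_irrefl k)
        · rw [if_neg hp'1, if_pos hq'] at hinj
          exfalso
          have h1 : k < q.2 := hq' ▸ hq1
          have h2 : p.1 < k := hp'2 ▸ hp1
          rw [← hinj] at h1; exact absurd (h1.trans h2) (lt_irrefl k)
        · rw [if_neg hp'1, if_neg hq'1] at hinj
          exact Prod.ext hinj (hp'2.trans hq'2.symm)
    have hunion : ((Finset.Ico (m k - 2*(m k - a k)) (m k) ∪
          Finset.Ioc (m k) (m k + 2*(a k - m k))).card : ℤ) ≤ 2 * |a k - m k| := by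
      have h1 := Finset.card_union_le (Finset.Ico (m k - 2*(m k - a k)) (m k))
          (Finset.Ioc (m k) (m k + 2*(a k - m k)))
      have h2 : (Finset.Ico (m k - 2*(m k - a k)) (m k)).card = (2*(m k - a k)).toNat := by
        rw [Int.card_Ico]; congr 1; ring
      have h3 : (Finset.Ioc (m k) (m k + 2*(a k - m k))).card = (2*(a k - m k)).toNat := by
        rw [Int.card_Ioc]; congr 1; ring
      have := h1
      rw [h2, h3] at this
      have hcast : ((Finset.Ico (m k - 2*(m k - a k)) (m k) ∪
          Finset.Ioc (m k) (m k + 2*(a k - m k))).card : ℤ)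
          ≤ ((2*(m k - a k)).toNat : ℤ) + ((2*(a k - m k)).toNat : ℤ) := by
        exact_mod_cast this
      have habs : ((2*(m k - a k)).toNat : ℤ) + ((2*(a k - m k)).toNat : ℤ)
          = 2 * |a k - m k| := by
        rcases abs_cases (a k - m k) with ⟨h1, h2⟩ | ⟨h1, h2⟩ <;> rw [h1] <;> omega
      rw [habs] at hcast; exact hcast
    calc ((T.filter (fun p => f p = k)).card : ℤ) ≤ _ := by exact_mod_cast hsub
      _ ≤ 2 * |a k - m k| := hunion
  calc (T.card : ℤ) = ∑ k : Fin n, ((T.filter (fun p => f p = k)).card : ℤ) := by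
        rw [hcard]; push_cast; ring
    _ ≤ ∑ k : Fin n, 2 * |a k - m k| := Finset.sum_le_sum (fun k _ => key k)
    _ = 2 * ∑ i, |a i - m i| := by rw [Finset.mul_sum]
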